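/- For all h ≥ 1 and k ≥ 2, every deterministic k-way branching program solving BT^h_2(k) has depth at least 2^h. -/

import Mathlib

/-! Framework: the tree evaluation problem and deterministic k-way branching programs.

The balanced binary tree of height `h` has nodes numbered heap-style `1, …, 2^h - 1`:
the root is node `1` and the children of node `i` are `2i` and `2i+1`.
Elements of `[k] = {1,…,k}` are represented by `Fin k` (the element `1 ∈ [k]`
corresponds to `(0 : Fin k)`). -/

/-- Node `i` is a leaf of the height-`h` balanced binary tree. -/
def IsLeafNode (h i : ℕ) : Prop := 2 ^ (h - 1) ≤ i ∧ i < 2 ^ h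

/-- Node `i` is an internal node of the height-`h` balanced binary tree. -/
def IsInternalNode (h i : ℕ) : Prop := 1 ≤ i ∧ i < 2 ^ (h - 1)

/-- An input to the height-`h` tree evaluation problem over `[k]`: a binary function on `[k]`
for each internal node and a value in `[k]` for each leaf (values at irrelevant indices
are ignored). -/
structure TEInput (h k : ℕ) where
  f : ℕ → Fin k → Fin k → Fin k
  leaf : ℕ → Fin k

/-- Auxiliary recursion (on fuel) computing node values. -/
def TEInput.valAux {h k : ℕ} (I : TEInput h k) : ℕ → ℕ → Fin k
  | 0, i => I.leaf i
  | m + 1, i =>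
      if 2 ^ (h - 1) ≤ i then I.leaf i
      else I.f i (I.valAux m (2 * i)) (I.valAux m (2 * i + 1))

/-- The value `v_i^I` of node `i`: the leaf value if `i` is a leaf, and
`f_i^I (v_{2i}^I, v_{2i+1}^I)` if `i` is an internal node. -/
def TEInput.val {h k : ℕ} (I : TEInput h k) (i : ℕ) : Fin k := I.valAux h i

/-- The input variables of the tree evaluation problem: one variable `f_i(a,b)` for each
internal node `i` and `a b ∈ [k]`, and one variable `l_i` for each leaf `i`. -/
inductive TEVar (h k : ℕ) where
  | internal (i : ℕ) (hi : IsInternalNode h i) (a b : Fin k) : TEVar h k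
  | leaf (i : ℕ) (hi : IsLeafNode h i) : TEVar h k

/-- The value of a variable under an input. -/
def TEInput.evalVar {h k : ℕ} (I : TEInput h k) : TEVar h k → Fin k
  | .internal i _ a b => I.f i a b
  | .leaf i _ => I.leaf i

/-- The node a variable belongs to. -/
def TEVar.node {h k : ℕ} : TEVar h k → ℕ
  | .internal i _ _ _ => i
  | .leaf i _ => i

/-- `X` is the thrifty `i` variable of input `I`: it is `f_i(v_{2i}^I, v_{2i+1}^I)`
if `i` is an internal node, and `l_i` if `i` is a leaf. -/
def IsThriftyVarOf {h k : ℕ} (I : TEInput h k) (i : ℕ) : TEVar h k → Prop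
  | .internal j _ a b => j = i ∧ a = I.val (2 * j) ∧ b = I.val (2 * j + 1)
  | .leaf j _ => j = i

/-- A deterministic `k`-way branching program with variables indexed by `V` and
output set `R`: a set of states (of cardinality `size`), a start state, each state
labeled either with a variable to query (non-output states, with `k` out-edges
labeled `1,…,k`) or with an output value (output sink states). -/
structure DetBP (V : Type) (k : ℕ) (R : Type) where
  size : ℕ
  start : Fin size
  label : Fin size → V ⊕ R
  next : Fin size → Fin k → Fin size

namespace DetBP

variable {V : Type} {k : ℕ} {R : Type}

/-- One step of computation on input `x`: from a state querying variable `v`, follow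
the out-edge labeled `x v`; output states are sinks. -/
def step (B : DetBP V k R) (x : V → Fin k) (s : Fin B.size) : Fin B.size :=
  match B.label s with
  | .inl v => B.next s (x v)
  | .inr _ => s

/-- The state of the computation path of `x` at time `t`. -/
def run (B : DetBP V k R) (x : V → Fin k) (t : ℕ) : Fin B.size :=
  (B.step x)^[t] B.start

/-- The depth of `B` is at most `D`: on every input, the computation path reaches an
output state within its first `D` states. -/
def DepthLE (B : DetBP V k R) (D : ℕ) : Prop :=
  ∀ x : V → Fin k, ∃ t < D, (B.label (B.run x t)).isRight = true

/-- `B` solves the function tree evaluation problem `FT^h_2(k)`: on every input `I`, the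
computation path ends in the output state labeled with the root value `v_1^I`. -/
def SolvesFT {h : ℕ} (B : DetBP (TEVar h k) k (Fin k)) : Prop :=
  ∀ I : TEInput h k, ∃ t, B.label (B.run I.evalVar t) = Sum.inr (I.val 1)

/-- `B` solves the decision tree evaluation problem `BT^h_2(k)`: on every input `I`, the
computation path ends in the output state labeled with whether `v_1^I = 1`
(the element `1 ∈ [k]` being `(0 : Fin k)`). -/
def SolvesBT {h : ℕ} (B : DetBP (TEVar h k) k Bool) : Prop :=
  ∀ I : TEInput h k, ∃ t, B.label (B.run I.evalVar t) = Sum.inr (decide ((I.val 1 : Fin k).val = 0))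

/-- `B` is thrifty: on every input `I`, every query `f_i(a,b)` made along the computation
path of `I` satisfies `a = v_{2i}^I` and `b = v_{2i+1}^I`. -/
def Thrifty {h : ℕ} (B : DetBP (TEVar h k) k R) : Prop :=
  ∀ (I : TEInput h k) (t i : ℕ) (hi : IsInternalNode h i) (a b : Fin k),
    B.label (B.run I.evalVar t) = Sum.inl (TEVar.internal i hi a b) →
    a = I.val (2 * i) ∧ b = I.val (2 * i + 1)

end DetBP


/-! ### Auxiliary material for the lower bound proof -/

section Aux

lemma myrun_succ {V R : Type} {k : ℕ} (B : DetBP V k R) (x : V → Fin k) (t : ℕ) :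
    B.run x (t + 1) = B.step x (B.run x t) :=
  Function.iterate_succ_apply' _ _ _

lemma mysink_run {V R : Type} {k : ℕ} (B : DetBP V k R) (x : V → Fin k) {t : ℕ} {r : R}
    (ht : B.label (B.run x t) = Sum.inr r) : ∀ s, B.run x (t + s) = B.run x t := by
  intro s
  induction s with
  | zero => rfl
  | succ n ih =>
    have : t + (n + 1) = (t + n) + 1 := by omega
    rw [this, myrun_succ, ih]
    simp [DetBP.step, ht]

lemma myout_unique {V R : Type} {k : ℕ} (B : DetBP V k R) (x : V → Fin k) {t t' : ℕ} {r r' : R}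
    (ht : B.label (B.run x t) = Sum.inr r) (ht' : B.label (B.run x t') = Sum.inr r') :
    r = r' := by
  rcases le_total t t' with hle | hle
  · have h1 := mysink_run B x ht (t' - t)
    rw [Nat.add_sub_cancel' hle] at h1
    rw [h1, ht] at ht'
    exact Sum.inr.inj ht'
  · have h1 := mysink_run B x ht' (t - t')
    rw [Nat.add_sub_cancel' hle] at h1
    rw [h1, ht'] at ht
    exact (Sum.inr.inj ht).symm

lemma myrun_agree {V R : Type} {k : ℕ} (B : DetBP V k R) (x x' : V → Fin k) (T : ℕ)
    (hag : ∀ t < T, ∀ v, B.label (B.run x t) = Sum.inl v → x' v = x v) :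
    ∀ t ≤ T, B.run x' t = B.run x t := by
  intro t
  induction t with
  | zero => intro _; rfl
  | succ n ih =>
    intro hn
    have hih := ih (by omega)
    rw [myrun_succ, myrun_succ, hih]
    cases hl : B.label (B.run x n) with
    | inl v => simp [DetBP.step, hl, hag n (by omega) v hl]
    | inr r => simp [DetBP.step, hl]

variable {h k : ℕ} [NeZero k]

/-- The all-zero input with addition gates. -/
def myI (h k : ℕ) [NeZero k] : TEInput h k :=
  ⟨fun _ a b => a + b, fun _ => 0⟩

/-- The input obtained from `myI` by perturbing node `j`. -/
def myI' (h k : ℕ) [NeZero k] (j : ℕ) : TEInput h k :=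
  ⟨fun i a b => if i = j ∧ a = 0 ∧ b = 0 then 1 else a + b,
   fun i => if i = j then 1 else 0⟩

lemma myI_valAux (m i : ℕ) : (myI h k).valAux m i = 0 := by
  induction m generalizing i with
  | zero => rfl
  | succ n ih =>
    show (if 2 ^ (h - 1) ≤ i then (myI h k).leaf i
      else (myI h k).f i ((myI h k).valAux n (2 * i)) ((myI h k).valAux n (2 * i + 1))) = 0
    rw [ih, ih]
    split <;> simp [myI]

lemma two_le_pow {n : ℕ} (hn : 1 ≤ n) : 2 ≤ 2 ^ n := by
  calc (2:ℕ) = 2 ^ 1 := (pow_one 2).symm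
    _ ≤ 2 ^ n := Nat.pow_le_pow_right (by omega) hn

lemma div_pow_succ (j d : ℕ) : j / 2 ^ d / 2 = j / 2 ^ (d + 1) := by
  rw [Nat.div_div_eq_div_mul, ← pow_succ]

lemma div_pow_inj {j d e i : ℕ} (hi : 1 ≤ i) (hd : j / 2 ^ d = i) (he : j / 2 ^ e = i) :
    d = e := by
  by_contra hne
  wlog hlt : d < e generalizing d e
  · exact this he hd (Ne.symm hne) (by omega)
  have : j / 2 ^ e = j / 2 ^ d / 2 ^ (e - d) := by
    rw [Nat.div_div_eq_div_mul, ← pow_add]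
    congr 2
    omega
  rw [hd, he] at this
  have h2 : i / 2 ^ (e - d) ≤ i / 2 := Nat.div_le_div_left (two_le_pow (by omega)) (by omega)
  have h3 : i / 2 < i := Nat.div_lt_self (by omega) (by omega)
  omega

lemma myI'_valAux_zero (j : ℕ) (m i : ℕ) (hnd : ∀ d, j / 2 ^ d ≠ i) :
    (myI' h k j).valAux m i = 0 := by
  induction m generalizing i with
  | zero =>
    show (if i = j then (1 : Fin k) else 0) = 0
    rw [if_neg]
    intro hij
    exact hnd 0 (by simpa using hij.symm)
  | succ n ih =>
    have hij : i ≠ j := by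
      intro hij
      exact hnd 0 (by simpa using hij.symm)
    show (if 2 ^ (h - 1) ≤ i then (myI' h k j).leaf i
      else (myI' h k j).f i ((myI' h k j).valAux n (2 * i)) ((myI' h k j).valAux n (2 * i + 1))) = 0
    have hc1 : ∀ d, j / 2 ^ d ≠ 2 * i := by
      intro d hd
      apply hnd (d + 1)
      rw [← div_pow_succ, hd]
      omega
    have hc2 : ∀ d, j / 2 ^ d ≠ 2 * i + 1 := by
      intro d hd
      apply hnd (d + 1)
      rw [← div_pow_succ, hd]
      omega
    rw [ih _ hc1, ih _ hc2]
    split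
    · show (if i = j then (1 : Fin k) else 0) = 0
      rw [if_neg hij]
    · show (if i = j ∧ (0:Fin k) = 0 ∧ (0:Fin k) = 0 then (1:Fin k) else 0 + 0) = 0
      rw [if_neg (by tauto)]
      simp

lemma myI'_valAux_one (hh : 1 ≤ h) (j : ℕ) (hj1 : 1 ≤ j) (hjh : j < 2 ^ h)
    (d m i : ℕ) (hi : 1 ≤ i) (hd : j / 2 ^ d = i) (hdm : d < m) :
    (myI' h k j).valAux m i = 1 := by
  induction d generalizing m i with
  | zero =>
    simp only [pow_zero, Nat.div_one] at hd
    subst hd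
    obtain ⟨n, rfl⟩ : ∃ n, m = n + 1 := ⟨m - 1, by omega⟩
    show (if 2 ^ (h - 1) ≤ j then (myI' h k j).leaf j
      else (myI' h k j).f j ((myI' h k j).valAux n (2 * j)) ((myI' h k j).valAux n (2 * j + 1))) = 1
    split
    · show (if j = j then (1 : Fin k) else 0) = 1
      rw [if_pos rfl]
    · have hz1 : (myI' h k j).valAux n (2 * j) = 0 := by
        apply myI'_valAux_zero
        intro e he
        have := Nat.div_le_self j (2 ^ e)
        omega
      have hz2 : (myI' h k j).valAux n (2 * j + 1) = 0 := by
        apply myI'_valAux_zero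
        intro e he
        have := Nat.div_le_self j (2 ^ e)
        omega
      rw [hz1, hz2]
      show (if j = j ∧ (0:Fin k) = 0 ∧ (0:Fin k) = 0 then (1:Fin k) else 0 + 0) = 1
      rw [if_pos ⟨rfl, rfl, rfl⟩]
  | succ d ihd =>
    obtain ⟨n, rfl⟩ : ∃ n, m = n + 1 := ⟨m - 1, by omega⟩
    have hileaf : ¬ (2 ^ (h - 1) ≤ i) := by
      rw [not_le, ← hd]
      rw [Nat.div_lt_iff_lt_mul (Nat.two_pow_pos _)]
      calc j < 2 ^ h := hjh
        _ ≤ 2 ^ (h - 1 + (d + 1)) := Nat.pow_le_pow_right (by omega) (by omega)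
        _ = 2 ^ (h - 1) * 2 ^ (d + 1) := pow_add 2 _ _
    have hij : i ≠ j := by
      rw [← hd]
      have : j / 2 ^ (d + 1) < j := Nat.div_lt_self (by omega) (by
        have := two_le_pow (show 1 ≤ d + 1 by omega)
        omega)
      omega
    show (if 2 ^ (h - 1) ≤ i then (myI' h k j).leaf i
      else (myI' h k j).f i ((myI' h k j).valAux n (2 * i)) ((myI' h k j).valAux n (2 * i + 1))) = 1
    rw [if_neg hileaf]
    have hb : j / 2 ^ d / 2 = i := by rw [div_pow_succ, hd]
    have hbcases : j / 2 ^ d = 2 * i ∨ j / 2 ^ d = 2 * i + 1 := by omega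
    have hother : ∀ c, (j / 2 ^ d ≠ c) → (∀ e, j / 2 ^ e ≠ c) → True := fun _ _ _ => trivial
    rcases hbcases with hcase | hcase
    · -- path goes to left child
      have h1 : (myI' h k j).valAux n (2 * i) = 1 := ihd n (2 * i) (by omega) hcase (by omega)
      have h0 : (myI' h k j).valAux n (2 * i + 1) = 0 := by
        apply myI'_valAux_zero
        intro e he
        have hei : j / 2 ^ (e + 1) = i := by rw [← div_pow_succ, he]; omega
        have heq := div_pow_inj hi hei (show j / 2 ^ (d+1) = i from hd)
        have hed : e = d := by omega
        rw [hed] at he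
        omega
      rw [h1, h0]
      show (if i = j ∧ (1:Fin k) = 0 ∧ (0:Fin k) = 0 then (1:Fin k) else 1 + 0) = 1
      rw [if_neg (by tauto)]
      simp
    · -- path goes to right child
      have h1 : (myI' h k j).valAux n (2 * i + 1) = 1 := ihd n (2 * i + 1) (by omega) hcase (by omega)
      have h0 : (myI' h k j).valAux n (2 * i) = 0 := by
        apply myI'_valAux_zero
        intro e he
        have hei : j / 2 ^ (e + 1) = i := by rw [← div_pow_succ, he]; omega
        have heq := div_pow_inj hi hei (show j / 2 ^ (d+1) = i from hd)
        have hed : e = d := by omega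
        rw [hed] at he
        omega
      rw [h1, h0]
      show (if i = j ∧ (0:Fin k) = 0 ∧ (1:Fin k) = 0 then (1:Fin k) else 0 + 1) = 1
      rw [if_neg (by tauto)]
      simp

lemma myI'_val_root (hh : 1 ≤ h) (j : ℕ) (hj1 : 1 ≤ j) (hjh : j < 2 ^ h) :
    (myI' h k j).val 1 = 1 := by
  set d := Nat.log 2 j with hdef
  have h1 : 2 ^ d ≤ j := Nat.pow_log_le_self 2 (by omega)
  have h2 : j < 2 ^ (d + 1) := Nat.lt_pow_succ_log_self (by omega) j
  have hd : j / 2 ^ d = 1 := by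
    have hge : 1 ≤ j / 2 ^ d := (Nat.one_le_div_iff (Nat.two_pow_pos _)).2 h1
    have hlt : j / 2 ^ d < 2 := by
      rw [Nat.div_lt_iff_lt_mul (Nat.two_pow_pos _)]
      calc j < 2 ^ (d + 1) := h2
        _ = 2 * 2 ^ d := by rw [pow_succ]; ring
    omega
  have hdh : d < h := by
    have : 2 ^ d < 2 ^ h := lt_of_le_of_lt h1 hjh
    exact (Nat.pow_lt_pow_iff_right (by omega)).1 this
  exact myI'_valAux_one hh j hj1 hjh d h 1 le_rfl hd hdh

end Aux

/-- For all `h ≥ 1` and `k ≥ 2`, every deterministic `k`-way branching program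
solving `BT^h_2(k)` has depth at least `2^h` (i.e. its depth is not at most `2^h - 1`). -/
theorem stmt_10 (h k : ℕ) (hh : 1 ≤ h) (hk : 2 ≤ k) (B : DetBP (TEVar h k) k Bool)
    (hB : B.SolvesBT) : ¬ B.DepthLE (2 ^ h - 1) := by
  haveI : NeZero k := ⟨by omega⟩
  intro hD
  set I : TEInput h k := myI h k with hI
  set x : TEVar h k → Fin k := I.evalVar with hx
  obtain ⟨t0, ht0lt, ht0⟩ := hD x
  obtain ⟨r0, hr0⟩ := Sum.isRight_iff.1 ht0
  -- the output on input I is `true`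
  obtain ⟨t1, ht1⟩ := hB I
  have hval0 : I.val 1 = 0 := myI_valAux h 1
  have hdec0 : decide ((I.val 1 : Fin k).val = 0) = true := by
    rw [hval0]; simp
  have hr0true : r0 = true := by
    have := myout_unique B x hr0 (by rw [← hx] at ht1; exact ht1)
    rw [this, hdec0]
  -- find a node whose variables are never queried on the path of I
  set q : ℕ → ℕ := fun s => match B.label (B.run x s) with
    | .inl v => v.node
    | .inr _ => 0 with hq
  set Q : Finset ℕ := (Finset.range t0).image q with hQ
  have hQcard : Q.card ≤ t0 := Finset.card_image_le.trans (by simp)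
  have hIcoQ : ¬ (Finset.Ico 1 (2 ^ h) ⊆ Q) := by
    intro hsub
    have hc := Finset.card_le_card hsub
    rw [Nat.card_Ico] at hc
    omega
  obtain ⟨j, hjmem, hjQ⟩ := Finset.not_subset.1 hIcoQ
  rw [Finset.mem_Ico] at hjmem
  -- the perturbed input
  set x' : TEVar h k → Fin k := (myI' h k j).evalVar with hx'
  have hagree : ∀ t < t0, ∀ v, B.label (B.run x t) = Sum.inl v → x' v = x v := by
    intro t ht v hv
    have hnode : v.node ≠ j := by
      intro heq
      apply hjQ
      rw [hQ]
      refine Finset.mem_image.2 ⟨t, Finset.mem_range.2 ht, ?_⟩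
      show (match B.label (B.run x t) with
        | .inl v => v.node
        | .inr _ => 0) = j
      rw [hv]
      exact heq
    cases v with
    | internal i hi a b =>
      have hij : i ≠ j := hnode
      show (myI' h k j).f i a b = I.f i a b
      show (if i = j ∧ a = 0 ∧ b = 0 then (1 : Fin k) else a + b) = a + b
      rw [if_neg (by tauto)]
    | leaf i hi =>
      have hij : i ≠ j := hnode
      show (myI' h k j).leaf i = I.leaf i
      show (if i = j then (1 : Fin k) else 0) = 0
      rw [if_neg hij]
  have hrun : B.run x' t0 = B.run x t0 := myrun_agree B x x' t0 hagree t0 le_rfl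
  have hlab' : B.label (B.run x' t0) = Sum.inr true := by
    rw [hrun, hr0, hr0true]
  obtain ⟨t2, ht2⟩ := hB (myI' h k j)
  have hvalroot : (myI' h k j).val 1 = 1 := myI'_val_root hh j hjmem.1 hjmem.2
  have hdec1 : decide (((myI' h k j).val 1 : Fin k).val = 0) = false := by
    rw [hvalroot]
    have : ((1 : Fin k)).val = 1 := by
      show 1 % k = 1
      exact Nat.mod_eq_of_lt (by omega)
    simp only [this]
    simp
  rw [hdec1, ← hx'] at ht2
  have := myout_unique B x' hlab' ht2
  simp at this
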